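/- arXiv:0712.2490 — 5 statements merged into one kernel-verified Lean document; each statement's English description precedes it below -/
import Mathlib

section
/- Let X be a finite type (the hidden variable space), p : X → ℝ≥0 a probability distribution, and for each x ∈ X and each setting pair (α,β) ∈ {A,a} × {B,b}, let Δ₁(α,x), Δ₂(β,x), E₁(α,x), E₂(β,x) be reals with 0 < E₁(α,x), 0 < E₂(β,x), |Δ₁(α,x)| ≤ E₁(α,x), |Δ₂(β,x)| ≤ E₂(β,x). Define E(α,β) = Σₓ p(x) E₁(α,x) E₂(β,x) and B = Σ_{(α,β)} ε(α,β) Σₓ p(x) Δ₁(α,x) Δ₂(β,x) / E(α,β), where ε(α,β) = 1 except ε(a,b) = −1. Then |B| ≤ 4 − 2 Σₓ p(x) · min over (α,β) of E₁(α,x)E₂(β,x)/E(α,β). -/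
lemma chsh_basic (s₁ s₂ t₁ t₂ : ℝ) (hs₁ : |s₁| ≤ 1) (hs₂ : |s₂| ≤ 1)
    (ht₁ : |t₁| ≤ 1) (ht₂ : |t₂| ≤ 1) :
    |s₁ * t₁ + s₁ * t₂ + s₂ * t₁ - s₂ * t₂| ≤ 2 := by
  have h1 : |s₁ * t₁ + s₁ * t₂ + s₂ * t₁ - s₂ * t₂|
      ≤ |s₁| * |t₁ + t₂| + |s₂| * |t₁ - t₂| := by
    calc |s₁ * t₁ + s₁ * t₂ + s₂ * t₁ - s₂ * t₂|
        = |s₁ * (t₁ + t₂) + s₂ * (t₁ - t₂)| := by ring_nf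
      _ ≤ |s₁ * (t₁ + t₂)| + |s₂ * (t₁ - t₂)| := abs_add_le _ _
      _ = |s₁| * |t₁ + t₂| + |s₂| * |t₁ - t₂| := by rw [abs_mul, abs_mul]
  have h2 : |s₁| * |t₁ + t₂| ≤ |t₁ + t₂| :=
    mul_le_of_le_one_left (abs_nonneg _) hs₁
  have h3 : |s₂| * |t₁ - t₂| ≤ |t₁ - t₂| :=
    mul_le_of_le_one_left (abs_nonneg _) hs₂
  have h4 : |t₁ + t₂| + |t₁ - t₂| ≤ 2 := by
    obtain ⟨c1, c2⟩ := abs_le.mp ht₁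
    obtain ⟨d1, d2⟩ := abs_le.mp ht₂
    rcases abs_cases (t₁ + t₂) with ⟨h, _⟩ | ⟨h, _⟩ <;>
      rcases abs_cases (t₁ - t₂) with ⟨h', _⟩ | ⟨h', _⟩ <;> rw [h, h'] <;> linarith
  linarith

lemma chsh_core (s₁ s₂ t₁ t₂ : ℝ) (hs₁ : |s₁| ≤ 1) (hs₂ : |s₂| ≤ 1)
    (ht₁ : |t₁| ≤ 1) (ht₂ : |t₂| ≤ 1) (r₁ r₂ r₃ r₄ : ℝ)
    (hr₁ : 0 ≤ r₁) (hr₂ : 0 ≤ r₂) (hr₃ : 0 ≤ r₃) (hr₄ : 0 ≤ r₄) :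
    |r₁ * (s₁ * t₁) + r₂ * (s₁ * t₂) + r₃ * (s₂ * t₁) - r₄ * (s₂ * t₂)|
      ≤ r₁ + r₂ + r₃ + r₄ - 2 * min (min r₁ r₂) (min r₃ r₄) := by
  set m := min (min r₁ r₂) (min r₃ r₄) with hm
  have hm₁ : m ≤ r₁ := le_trans (min_le_left _ _) (min_le_left _ _)
  have hm₂ : m ≤ r₂ := le_trans (min_le_left _ _) (min_le_right _ _)
  have hm₃ : m ≤ r₃ := le_trans (min_le_right _ _) (min_le_left _ _)
  have hm₄ : m ≤ r₄ := le_trans (min_le_right _ _) (min_le_right _ _)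
  have hm0 : 0 ≤ m := le_min (le_min hr₁ hr₂) (le_min hr₃ hr₄)
  obtain ⟨hc1, hc2⟩ := abs_le.mp (chsh_basic s₁ s₂ t₁ t₂ hs₁ hs₂ ht₁ ht₂)
  have h1u : m * (s₁ * t₁ + s₁ * t₂ + s₂ * t₁ - s₂ * t₂) ≤ 2 * m :=
    by nlinarith
  have h1l : -(2 * m) ≤ m * (s₁ * t₁ + s₁ * t₂ + s₂ * t₁ - s₂ * t₂) :=
    by nlinarith
  have k1 : |s₁ * t₁| ≤ 1 := by rw [abs_mul]; exact mul_le_one₀ hs₁ (abs_nonneg _) ht₁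
  have k2 : |s₁ * t₂| ≤ 1 := by rw [abs_mul]; exact mul_le_one₀ hs₁ (abs_nonneg _) ht₂
  have k3 : |s₂ * t₁| ≤ 1 := by rw [abs_mul]; exact mul_le_one₀ hs₂ (abs_nonneg _) ht₁
  have k4 : |s₂ * t₂| ≤ 1 := by rw [abs_mul]; exact mul_le_one₀ hs₂ (abs_nonneg _) ht₂
  obtain ⟨k1l, k1u⟩ := abs_le.mp k1
  obtain ⟨k2l, k2u⟩ := abs_le.mp k2
  obtain ⟨k3l, k3u⟩ := abs_le.mp k3
  obtain ⟨k4l, k4u⟩ := abs_le.mp k4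
  have p1u := mul_le_mul_of_nonneg_left k1u (sub_nonneg.2 hm₁)
  have p1l := mul_le_mul_of_nonneg_left k1l (sub_nonneg.2 hm₁)
  have p2u := mul_le_mul_of_nonneg_left k2u (sub_nonneg.2 hm₂)
  have p2l := mul_le_mul_of_nonneg_left k2l (sub_nonneg.2 hm₂)
  have p3u := mul_le_mul_of_nonneg_left k3u (sub_nonneg.2 hm₃)
  have p3l := mul_le_mul_of_nonneg_left k3l (sub_nonneg.2 hm₃)
  have p4u := mul_le_mul_of_nonneg_left k4u (sub_nonneg.2 hm₄)
  have p4l := mul_le_mul_of_nonneg_left k4l (sub_nonneg.2 hm₄)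
  rw [abs_le]
  constructor <;> nlinarith

lemma chsh_perx (a₁ a₂ b₁ b₂ e₁ e₂ e₃ e₄ u₁ u₂ v₁ v₂ : ℝ)
    (ha₁ : 0 < a₁) (ha₂ : 0 < a₂) (hb₁ : 0 < b₁) (hb₂ : 0 < b₂)
    (he₁ : 0 < e₁) (he₂ : 0 < e₂) (he₃ : 0 < e₃) (he₄ : 0 < e₄)
    (hu₁ : |u₁| ≤ a₁) (hu₂ : |u₂| ≤ a₂) (hv₁ : |v₁| ≤ b₁) (hv₂ : |v₂| ≤ b₂) :
    |u₁ * v₁ / e₁ + u₁ * v₂ / e₂ + u₂ * v₁ / e₃ - u₂ * v₂ / e₄|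
      ≤ a₁ * b₁ / e₁ + a₁ * b₂ / e₂ + a₂ * b₁ / e₃ + a₂ * b₂ / e₄
        - 2 * min (min (a₁ * b₁ / e₁) (a₁ * b₂ / e₂))
                  (min (a₂ * b₁ / e₃) (a₂ * b₂ / e₄)) := by
  have hs₁ : |u₁ / a₁| ≤ 1 := by
    rw [abs_div, abs_of_pos ha₁, div_le_one ha₁]; exact hu₁
  have hs₂ : |u₂ / a₂| ≤ 1 := by
    rw [abs_div, abs_of_pos ha₂, div_le_one ha₂]; exact hu₂
  have ht₁ : |v₁ / b₁| ≤ 1 := by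
    rw [abs_div, abs_of_pos hb₁, div_le_one hb₁]; exact hv₁
  have ht₂ : |v₂ / b₂| ≤ 1 := by
    rw [abs_div, abs_of_pos hb₂, div_le_one hb₂]; exact hv₂
  have key := chsh_core (u₁ / a₁) (u₂ / a₂) (v₁ / b₁) (v₂ / b₂) hs₁ hs₂ ht₁ ht₂
    (a₁ * b₁ / e₁) (a₁ * b₂ / e₂) (a₂ * b₁ / e₃) (a₂ * b₂ / e₄)
    (by positivity) (by positivity) (by positivity) (by positivity)
  have e1 : a₁ * b₁ / e₁ * (u₁ / a₁ * (v₁ / b₁)) = u₁ * v₁ / e₁ := by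
    field_simp
  have e2 : a₁ * b₂ / e₂ * (u₁ / a₁ * (v₂ / b₂)) = u₁ * v₂ / e₂ := by
    field_simp
  have e3 : a₂ * b₁ / e₃ * (u₂ / a₂ * (v₁ / b₁)) = u₂ * v₁ / e₃ := by
    field_simp
  have e4 : a₂ * b₂ / e₄ * (u₂ / a₂ * (v₂ / b₂)) = u₂ * v₂ / e₄ := by
    field_simp
  rw [e1, e2, e3, e4] at key
  linarith [key]


/-- Lemma 1 of the paper: the postselected CHSH-Bell quantity of a stochastic
LHV theory with measurement-dependent efficiencies satisfies the generalized
bound.  Settings are encoded by `Bool`: `true = A` (resp. `B`),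
`false = a` (resp. `b`). -/
theorem chsh_postselected_bound (X : Type) [Fintype X]
    (p : X → ℝ) (hp : ∀ x, 0 ≤ p x) (hp1 : ∑ x, p x = 1)
    (Δ₁ E₁ Δ₂ E₂ : Bool → X → ℝ)
    (hE₁ : ∀ α x, 0 < E₁ α x) (hE₂ : ∀ β x, 0 < E₂ β x)
    (hΔ₁ : ∀ α x, |Δ₁ α x| ≤ E₁ α x) (hΔ₂ : ∀ β x, |Δ₂ β x| ≤ E₂ β x)
    (E : Bool → Bool → ℝ)
    (hE : ∀ α β, E α β = ∑ x, p x * E₁ α x * E₂ β x)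
    (B : ℝ)
    (hB : B = (∑ x, p x * Δ₁ true x * Δ₂ true x) / E true true
            + (∑ x, p x * Δ₁ true x * Δ₂ false x) / E true false
            + (∑ x, p x * Δ₁ false x * Δ₂ true x) / E false true
            - (∑ x, p x * Δ₁ false x * Δ₂ false x) / E false false) :
    |B| ≤ 4 - 2 * ∑ x, p x *
      min (min (E₁ true x * E₂ true x / E true true)
               (E₁ true x * E₂ false x / E true false))
          (min (E₁ false x * E₂ true x / E false true)
               (E₁ false x * E₂ false x / E false false)) := by
  -- positivity of E
  have hEpos : ∀ α β, 0 < E α β := by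
    intro α β
    obtain ⟨x₀, hx₀⟩ : ∃ x, 0 < p x := by
      by_contra h
      push_neg at h
      have : ∑ x, p x = 0 :=
        Finset.sum_eq_zero fun x _ => le_antisymm (h x) (hp x)
      rw [this] at hp1; norm_num at hp1
    rw [hE]
    have h1 : p x₀ * E₁ α x₀ * E₂ β x₀ ≤ ∑ y, p y * E₁ α y * E₂ β y :=
      Finset.single_le_sum (f := fun y => p y * E₁ α y * E₂ β y)
        (fun y _ => mul_nonneg (mul_nonneg (hp y) (hE₁ α y).le) (hE₂ β y).le) (Finset.mem_univ x₀)
    have h2 : 0 < p x₀ * E₁ α x₀ * E₂ β x₀ := mul_pos (mul_pos hx₀ (hE₁ α x₀)) (hE₂ β x₀)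
    linarith
  have hone : ∀ α β, ∑ x, p x * E₁ α x * E₂ β x / E α β = 1 := by
    intro α β
    rw [← Finset.sum_div, ← hE, div_self (hEpos α β).ne']
  -- rewrite B as a single sum
  have hBsum : B = ∑ x, (p x * Δ₁ true x * Δ₂ true x / E true true
      + p x * Δ₁ true x * Δ₂ false x / E true false
      + p x * Δ₁ false x * Δ₂ true x / E false true
      - p x * Δ₁ false x * Δ₂ false x / E false false) := by
    rw [hB]
    simp only [Finset.sum_div]
    rw [← Finset.sum_add_distrib, ← Finset.sum_add_distrib, ← Finset.sum_sub_distrib]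
  -- pointwise bound
  have hpt : ∀ x, |p x * Δ₁ true x * Δ₂ true x / E true true
      + p x * Δ₁ true x * Δ₂ false x / E true false
      + p x * Δ₁ false x * Δ₂ true x / E false true
      - p x * Δ₁ false x * Δ₂ false x / E false false|
      ≤ p x * (E₁ true x * E₂ true x / E true true
        + E₁ true x * E₂ false x / E true false
        + E₁ false x * E₂ true x / E false true
        + E₁ false x * E₂ false x / E false false
        - 2 * min (min (E₁ true x * E₂ true x / E true true)
                       (E₁ true x * E₂ false x / E true false))
                  (min (E₁ false x * E₂ true x / E false true)
                       (E₁ false x * E₂ false x / E false false))) := by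
    intro x
    have hfac : p x * Δ₁ true x * Δ₂ true x / E true true
        + p x * Δ₁ true x * Δ₂ false x / E true false
        + p x * Δ₁ false x * Δ₂ true x / E false true
        - p x * Δ₁ false x * Δ₂ false x / E false false
        = p x * (Δ₁ true x * Δ₂ true x / E true true
          + Δ₁ true x * Δ₂ false x / E true false
          + Δ₁ false x * Δ₂ true x / E false true
          - Δ₁ false x * Δ₂ false x / E false false) := by ring
    rw [hfac, abs_mul, abs_of_nonneg (hp x)]
    refine mul_le_mul_of_nonneg_left ?_ (hp x)
    exact chsh_perx (E₁ true x) (E₁ false x) (E₂ true x) (E₂ false x)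
      (E true true) (E true false) (E false true) (E false false)
      (Δ₁ true x) (Δ₁ false x) (Δ₂ true x) (Δ₂ false x)
      (hE₁ _ _) (hE₁ _ _) (hE₂ _ _) (hE₂ _ _)
      (hEpos _ _) (hEpos _ _) (hEpos _ _) (hEpos _ _)
      (hΔ₁ _ _) (hΔ₁ _ _) (hΔ₂ _ _) (hΔ₂ _ _)
  calc |B| ≤ ∑ x, |p x * Δ₁ true x * Δ₂ true x / E true true
        + p x * Δ₁ true x * Δ₂ false x / E true false
        + p x * Δ₁ false x * Δ₂ true x / E false true
        - p x * Δ₁ false x * Δ₂ false x / E false false| := by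
        rw [hBsum]; exact Finset.abs_sum_le_sum_abs _ _
    _ ≤ ∑ x, p x * (E₁ true x * E₂ true x / E true true
        + E₁ true x * E₂ false x / E true false
        + E₁ false x * E₂ true x / E false true
        + E₁ false x * E₂ false x / E false false
        - 2 * min (min (E₁ true x * E₂ true x / E true true)
                       (E₁ true x * E₂ false x / E true false))
                  (min (E₁ false x * E₂ true x / E false true)
                       (E₁ false x * E₂ false x / E false false))) :=
        Finset.sum_le_sum fun x _ => hpt x
    _ = 4 - 2 * ∑ x, p x *
        min (min (E₁ true x * E₂ true x / E true true)
                 (E₁ true x * E₂ false x / E true false))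
            (min (E₁ false x * E₂ true x / E false true)
                 (E₁ false x * E₂ false x / E false false)) := by
        have hsplit : ∀ x ∈ Finset.univ, p x * (E₁ true x * E₂ true x / E true true
            + E₁ true x * E₂ false x / E true false
            + E₁ false x * E₂ true x / E false true
            + E₁ false x * E₂ false x / E false false
            - 2 * min (min (E₁ true x * E₂ true x / E true true)
                           (E₁ true x * E₂ false x / E true false))
                      (min (E₁ false x * E₂ true x / E false true)
                           (E₁ false x * E₂ false x / E false false)))
            = p x * E₁ true x * E₂ true x / E true true
            + p x * E₁ true x * E₂ false x / E true false
            + p x * E₁ false x * E₂ true x / E false true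
            + p x * E₁ false x * E₂ false x / E false false
            - 2 * (p x * min (min (E₁ true x * E₂ true x / E true true)
                           (E₁ true x * E₂ false x / E true false))
                      (min (E₁ false x * E₂ true x / E false true)
                           (E₁ false x * E₂ false x / E false false))) :=
          fun x _ => by ring
        rw [Finset.sum_congr rfl hsplit, Finset.sum_sub_distrib,
          Finset.sum_add_distrib, Finset.sum_add_distrib, Finset.sum_add_distrib,
          hone, hone, hone, hone, ← Finset.mul_sum]
        norm_num
end

section
/- In the setting of the generalized CHSH bound with hidden-variable-dependent efficiencies, if for every x the quantity E₁(α,x)E₂(β,x)/E(α,β) is independent of the measurement settings (α,β) (where E(α,β) = Σₓ p(x)E₁(α,x)E₂(β,x) and p is a probability distribution), then Σₓ p(x) · min_{(α,β)} E₁(α,x)E₂(β,x)/E(α,β) = 1, and consequently the postselected CHSH quantity satisfies |B| ≤ 2. -/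
/-- Lemma 2 (sufficiency direction): if E₁(α,x)E₂(β,x)/E(α,β) is independent
of the settings (α,β), then ∑ₓ p(x) min_{(α,β)} E₁E₂/E = 1 and the
postselected CHSH quantity satisfies |B| ≤ 2. Settings encoded by `Bool`. -/
theorem chsh_fair_sampling_bound (X : Type) [Fintype X]
    (p : X → ℝ) (hp : ∀ x, 0 ≤ p x) (hp1 : ∑ x, p x = 1)
    (Δ₁ E₁ Δ₂ E₂ : Bool → X → ℝ)
    (hE₁ : ∀ α x, 0 < E₁ α x) (hE₂ : ∀ β x, 0 < E₂ β x)
    (hΔ₁ : ∀ α x, |Δ₁ α x| ≤ E₁ α x) (hΔ₂ : ∀ β x, |Δ₂ β x| ≤ E₂ β x)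
    (E : Bool → Bool → ℝ)
    (hE : ∀ α β, E α β = ∑ x, p x * E₁ α x * E₂ β x)
    (hind : ∀ x (α β α' β' : Bool),
      E₁ α x * E₂ β x / E α β = E₁ α' x * E₂ β' x / E α' β')
    (B : ℝ)
    (hB : B = (∑ x, p x * Δ₁ true x * Δ₂ true x) / E true true
            + (∑ x, p x * Δ₁ true x * Δ₂ false x) / E true false
            + (∑ x, p x * Δ₁ false x * Δ₂ true x) / E false true
            - (∑ x, p x * Δ₁ false x * Δ₂ false x) / E false false) :
    (∑ x, p x *
      min (min (E₁ true x * E₂ true x / E true true)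
               (E₁ true x * E₂ false x / E true false))
          (min (E₁ false x * E₂ true x / E false true)
               (E₁ false x * E₂ false x / E false false))) = 1
    ∧ |B| ≤ 2 := by
  have hx0 : ∃ x : X, 0 < p x := by
    by_contra h
    push_neg at h
    have : ∑ x, p x = 0 := Finset.sum_eq_zero fun x _ => le_antisymm (h x) (hp x)
    rw [this] at hp1; norm_num at hp1
  obtain ⟨x₀, hx₀⟩ := hx0
  have hEpos : ∀ α β, 0 < E α β := by
    intro α β
    rw [hE]
    refine Finset.sum_pos'
      (fun x _ => mul_nonneg (mul_nonneg (hp x) (hE₁ α x).le) (hE₂ β x).le)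
      ⟨x₀, Finset.mem_univ _, mul_pos (mul_pos hx₀ (hE₁ α x₀)) (hE₂ β x₀)⟩
  set r : X → ℝ := fun x => E₁ true x * E₂ true x / E true true with hrdef
  have hr : ∀ x (α β : Bool), E₁ α x * E₂ β x / E α β = r x :=
    fun x α β => hind x α β true true
  have hrpos : ∀ x, 0 < r x := fun x => div_pos (mul_pos (hE₁ _ _) (hE₂ _ _)) (hEpos _ _)
  have hsum : ∑ x, p x * r x = 1 := by
    have h1 : ∀ x, p x * r x = p x * E₁ true x * E₂ true x / E true true := by
      intro x; simp only [hrdef]; ring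
    rw [Finset.sum_congr rfl fun x _ => h1 x, ← Finset.sum_div, ← hE true true,
      div_self (hEpos true true).ne']
  constructor
  · have hm : ∀ x, min (min (E₁ true x * E₂ true x / E true true)
               (E₁ true x * E₂ false x / E true false))
          (min (E₁ false x * E₂ true x / E false true)
               (E₁ false x * E₂ false x / E false false)) = r x := by
      intro x
      rw [hr x true true, hr x true false, hr x false true, hr x false false]
      simp
    calc (∑ x, p x *
      min (min (E₁ true x * E₂ true x / E true true)
               (E₁ true x * E₂ false x / E true false))
          (min (E₁ false x * E₂ true x / E false true)
               (E₁ false x * E₂ false x / E false false)))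
        = ∑ x, p x * r x := Finset.sum_congr rfl fun x _ => by rw [hm x]
      _ = 1 := hsum
  · set a : Bool → X → ℝ := fun α x => Δ₁ α x / E₁ α x with hadef
    set b : Bool → X → ℝ := fun β x => Δ₂ β x / E₂ β x with hbdef
    have ha : ∀ α x, |a α x| ≤ 1 := by
      intro α x
      rw [hadef]
      simp only [abs_div, abs_of_pos (hE₁ α x)]
      rw [div_le_one (hE₁ α x)]
      exact hΔ₁ α x
    have hb : ∀ β x, |b β x| ≤ 1 := by
      intro β x
      rw [hbdef]
      simp only [abs_div, abs_of_pos (hE₂ β x)]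
      rw [div_le_one (hE₂ β x)]
      exact hΔ₂ β x
    have hterm : ∀ α β : Bool, (∑ x, p x * Δ₁ α x * Δ₂ β x) / E α β
        = ∑ x, p x * r x * (a α x * b β x) := by
      intro α β
      rw [Finset.sum_div]
      refine Finset.sum_congr rfl fun x _ => ?_
      rw [← hr x α β, hadef, hbdef]
      have h1 := (hE₁ α x).ne'
      have h2 := (hE₂ β x).ne'
      have h3 := (hEpos α β).ne'
      field_simp
    have hBeq : B = ∑ x, p x * r x *
        (a true x * b true x + a true x * b false x + a false x * b true x
          - a false x * b false x) := by
      rw [hB, hterm, hterm, hterm, hterm, ← Finset.sum_add_distrib,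
        ← Finset.sum_add_distrib, ← Finset.sum_sub_distrib]
      exact Finset.sum_congr rfl fun x _ => by ring
    have key : ∀ x, |a true x * b true x + a true x * b false x + a false x * b true x
        - a false x * b false x| ≤ 2 := by
      intro x
      have h1 := ha true x
      have h2 := ha false x
      have h3 := abs_le.mp (hb true x)
      have h4 := abs_le.mp (hb false x)
      have hS : a true x * b true x + a true x * b false x + a false x * b true x
          - a false x * b false x
          = a true x * (b true x + b false x) + a false x * (b true x - b false x) := by
        ring
      rw [hS]
      calc |a true x * (b true x + b false x) + a false x * (b true x - b false x)|
          ≤ |a true x * (b true x + b false x)| + |a false x * (b true x - b false x)| :=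
            abs_add_le _ _
        _ = |a true x| * |b true x + b false x| + |a false x| * |b true x - b false x| := by
            rw [abs_mul, abs_mul]
        _ ≤ 1 * |b true x + b false x| + 1 * |b true x - b false x| := by
            gcongr
        _ ≤ 2 := by
            rw [one_mul, one_mul]
            rcases abs_cases (b true x + b false x) with ⟨e1, _⟩ | ⟨e1, _⟩ <;>
              rcases abs_cases (b true x - b false x) with ⟨e2, _⟩ | ⟨e2, _⟩ <;>
              rw [e1, e2] <;> linarith [h3.1, h3.2, h4.1, h4.2]
    calc |B| ≤ ∑ x, |p x * r x * (a true x * b true x + a true x * b false x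
          + a false x * b true x - a false x * b false x)| := by
          rw [hBeq]; exact Finset.abs_sum_le_sum_abs _ _
      _ ≤ ∑ x, p x * r x * 2 := by
          refine Finset.sum_le_sum fun x _ => ?_
          rw [abs_mul, abs_of_nonneg (mul_nonneg (hp x) (hrpos x).le)]
          exact mul_le_mul_of_nonneg_left (key x) (mul_nonneg (hp x) (hrpos x).le)
      _ = 2 := by rw [← Finset.sum_mul, hsum, one_mul]
end

section
/- Let E₁ : S₁ × X → ℝ>0 and E₂ : S₂ × X → ℝ>0 be positive functions on finite types, with |S₁|, |S₂| ≥ 1, and suppose the ratio E₁(α,x)E₂(β,x)/E(α,β) is independent of (α,β), where E(α,β) = Σₓ p(x)E₁(α,x)E₂(β,x) for a fixed everywhere-positive probability distribution p on X. Then there exist functions F₁ : S₁ → ℝ>0, F₂ : S₂ → ℝ>0, G₁ : X → ℝ>0, G₂ : X → ℝ>0 such that E₁(α,x) = F₁(α)G₁(x) and E₂(β,x) = F₂(β)G₂(x) for all α, β, x. -/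
/-- Key step of Theorem 2: if the ratio E₁(α,x)E₂(β,x)/E(α,β) is independent
of the settings (α,β), then the efficiencies factorize as a product of a
function of the setting and a function of the hidden variable. -/
theorem efficiency_factorizes (S₁ S₂ X : Type)
    [Fintype S₁] [Fintype S₂] [Fintype X]
    [Nonempty S₁] [Nonempty S₂]
    (E₁ : S₁ → X → ℝ) (E₂ : S₂ → X → ℝ)
    (hE₁ : ∀ α x, 0 < E₁ α x) (hE₂ : ∀ β x, 0 < E₂ β x)
    (p : X → ℝ) (hp : ∀ x, 0 < p x) (hp1 : ∑ x, p x = 1)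
    (hind : ∀ (x : X) (α α' : S₁) (β β' : S₂),
      E₁ α x * E₂ β x / (∑ y, p y * E₁ α y * E₂ β y)
        = E₁ α' x * E₂ β' x / (∑ y, p y * E₁ α' y * E₂ β' y)) :
    ∃ (F₁ : S₁ → ℝ) (F₂ : S₂ → ℝ) (G₁ G₂ : X → ℝ),
      (∀ α, 0 < F₁ α) ∧ (∀ β, 0 < F₂ β) ∧
      (∀ x, 0 < G₁ x) ∧ (∀ x, 0 < G₂ x) ∧
      (∀ α x, E₁ α x = F₁ α * G₁ x) ∧
      (∀ β x, E₂ β x = F₂ β * G₂ x) := by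
  obtain ⟨α₀⟩ := ‹Nonempty S₁›
  obtain ⟨β₀⟩ := ‹Nonempty S₂›
  have hX : Nonempty X := by
    by_contra h
    rw [not_nonempty_iff] at h
    simp [Finset.sum_eq_zero] at hp1
  set E : S₁ → S₂ → ℝ := fun α β => ∑ y, p y * E₁ α y * E₂ β y with hE
  have hEpos : ∀ α β, 0 < E α β := by
    intro α β
    apply Finset.sum_pos
    · intro y _
      exact mul_pos (mul_pos (hp y) (hE₁ α y)) (hE₂ β y)
    · exact Finset.univ_nonempty
  refine ⟨fun α => E α β₀ / E α₀ β₀, fun β => E α₀ β / E α₀ β₀ / E α₀ β₀,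
    fun x => E₁ α₀ x, fun x => E₂ β₀ x * E α₀ β₀, ?_, ?_, ?_, ?_, ?_, ?_⟩
  · intro α; exact div_pos (hEpos α β₀) (hEpos α₀ β₀)
  · intro β; exact div_pos (div_pos (hEpos α₀ β) (hEpos α₀ β₀)) (hEpos α₀ β₀)
  · intro x; exact hE₁ α₀ x
  · intro x; exact mul_pos (hE₂ β₀ x) (hEpos α₀ β₀)
  · intro α x
    have h := hind x α α₀ β₀ β₀
    rw [div_eq_div_iff (hEpos α β₀).ne' (hEpos α₀ β₀).ne'] at h
    have h4 : (E₁ α x * E α₀ β₀) * E₂ β₀ x = (E₁ α₀ x * E α β₀) * E₂ β₀ x := by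
      linear_combination h
    have h5 := mul_right_cancel₀ (hE₂ β₀ x).ne' h4
    rw [div_mul_eq_mul_div, eq_div_iff (hEpos α₀ β₀).ne']
    linarith
  · intro β x
    have h := hind x α₀ α₀ β β₀
    rw [div_eq_div_iff (hEpos α₀ β).ne' (hEpos α₀ β₀).ne'] at h
    have h4 : (E₂ β x * E α₀ β₀) * E₁ α₀ x = (E₂ β₀ x * E α₀ β) * E₁ α₀ x := by
      linear_combination h
    have h5 := mul_right_cancel₀ (hE₁ α₀ x).ne' h4
    show E₂ β x = E α₀ β / E α₀ β₀ / E α₀ β₀ * (E₂ β₀ x * E α₀ β₀)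
    rw [div_div, div_mul_eq_mul_div, eq_div_iff (mul_pos (hEpos α₀ β₀) (hEpos α₀ β₀)).ne']
    linear_combination (E α₀ β₀) * h5
end

section
/- Let M and M' be positive semidefinite Hermitian matrices on a finite-dimensional complex inner product space of dimension at least 2, with Tr(M') ≠ 0. Suppose that for every pair of orthonormal vectors φ₀, φ₁ we have ⟨φ₀|M|φ₀⟩⟨φ₁|M'|φ₁⟩ = ⟨φ₀|M'|φ₀⟩⟨φ₁|M|φ₁⟩. Then there exists a scalar κ ≥ 0 with M = κ M'. -/
open Matrix
open scoped ComplexOrder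

/-- Proportionality lemma from the proof of Theorem 4: if two positive
semidefinite matrices (dimension ≥ 2, Tr M' ≠ 0) satisfy
⟨φ₀|M|φ₀⟩⟨φ₁|M'|φ₁⟩ = ⟨φ₀|M'|φ₀⟩⟨φ₁|M|φ₁⟩ for every orthonormal pair
φ₀, φ₁, then M = κ M' for some κ ≥ 0. -/
theorem proportional_of_product_condition (n : ℕ) (hn : 2 ≤ n)
    (M M' : Matrix (Fin n) (Fin n) ℂ)
    (hM : M.PosSemidef) (hM' : M'.PosSemidef) (htr : M'.trace ≠ 0)
    (h : ∀ φ₀ φ₁ : Fin n → ℂ,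
      star φ₀ ⬝ᵥ φ₀ = 1 → star φ₁ ⬝ᵥ φ₁ = 1 → star φ₀ ⬝ᵥ φ₁ = 0 →
      (star φ₀ ⬝ᵥ M.mulVec φ₀) * (star φ₁ ⬝ᵥ M'.mulVec φ₁)
        = (star φ₀ ⬝ᵥ M'.mulVec φ₀) * (star φ₁ ⬝ᵥ M.mulVec φ₁)) :
    ∃ κ : ℝ, 0 ≤ κ ∧ M = (κ : ℂ) • M' := by
  -- trace nonneg
  have trnn : ∀ (A : Matrix (Fin n) (Fin n) ℂ), A.PosSemidef → 0 ≤ A.trace := by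
    intro A hA
    rw [Matrix.trace]
    apply Finset.sum_nonneg
    intro i _
    have := hA.diag_nonneg (i := i)
    simpa [dotProduct, Pi.single_apply, apply_ite] using this
  set τ := M.trace with hτ
  set τ' := M'.trace with hτ'
  have hτs : star τ = τ := by
    rw [hτ, ← Matrix.trace_conjTranspose, hM.1]
  have hτ's : star τ' = τ' := by
    rw [hτ', ← Matrix.trace_conjTranspose, hM'.1]
  set N := τ' • M - τ • M' with hNdef
  have hNh : N.IsHermitian := by
    unfold Matrix.IsHermitian
    rw [hNdef, conjTranspose_sub, conjTranspose_smul, conjTranspose_smul, hM.1, hM'.1, hτs, hτ's]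
  set U := (hNh.eigenvectorUnitary : Matrix (Fin n) (Fin n) ℂ) with hU
  set e := fun i => ⇑(hNh.eigenvectorBasis i) with he
  have horth : ∀ i j, star (e i) ⬝ᵥ (e j) = if i = j then 1 else 0 := by
    intro i j
    have := (orthonormal_iff_ite.mp hNh.eigenvectorBasis.orthonormal) i j
    rw [EuclideanSpace.inner_eq_star_dotProduct] at this
    rw [dotProduct_comm]
    exact this
  -- diagonal entries of conjugated matrices
  have diagEntry : ∀ (A : Matrix (Fin n) (Fin n) ℂ) i,
      (star U * A * U) i i = star (e i) ⬝ᵥ A *ᵥ (e i) := by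
    intro A i
    simp only [Matrix.mul_apply, dotProduct, Matrix.mulVec, Matrix.star_apply,
      hU, Matrix.IsHermitian.eigenvectorUnitary_apply, he, Finset.sum_mul, Finset.mul_sum]
    rw [Finset.sum_comm]
    apply Finset.sum_congr rfl
    intro k _
    apply Finset.sum_congr rfl
    intro l _
    simp only [Pi.star_apply]
    ring
  -- trace as sum over orthonormal basis
  have trSum : ∀ (A : Matrix (Fin n) (Fin n) ℂ),
      A.trace = ∑ i, star (e i) ⬝ᵥ A *ᵥ (e i) := by
    intro A
    have h1 : (star U * A * U).trace = A.trace := by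
      rw [Matrix.trace_mul_cycle]
      rw [show U * star U = 1 from Matrix.mem_unitaryGroup_iff.mp hNh.eigenvectorUnitary.2]
      rw [one_mul]
    rw [← h1, Matrix.trace]
    exact Finset.sum_congr rfl fun i _ => diagEntry A i
  set m := fun i => star (e i) ⬝ᵥ M *ᵥ (e i) with hm
  set m' := fun i => star (e i) ⬝ᵥ M' *ᵥ (e i) with hm'
  have hτsum : τ = ∑ i, m i := trSum M
  have hτ'sum : τ' = ∑ i, m' i := trSum M'
  -- eigenvalues of N are zero
  have hev : ∀ i, (hNh.eigenvalues i : ℂ) = 0 := by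
    intro i
    have h1 : star (e i) ⬝ᵥ N *ᵥ (e i) = (hNh.eigenvalues i : ℂ) := by
      have hmv : N *ᵥ (e i) = (hNh.eigenvalues i : ℂ) • (e i) := by
        simp only [he]
        rw [hNh.mulVec_eigenvectorBasis i]
        funext k
        simp [Complex.real_smul]
      have h0 : star (e i) ⬝ᵥ (e i) = 1 := by simpa using horth i i
      rw [hmv, dotProduct_smul, h0, smul_eq_mul, mul_one]
    have h2 : star (e i) ⬝ᵥ N *ᵥ (e i) = τ' * m i - τ * m' i := by
      rw [hNdef, Matrix.sub_mulVec, Matrix.smul_mulVec, Matrix.smul_mulVec,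
        dotProduct_sub, dotProduct_smul, dotProduct_smul, smul_eq_mul, smul_eq_mul]
    have h3 : τ' * m i - τ * m' i = ∑ j, (m' j * m i - m j * m' i) := by
      rw [hτsum, hτ'sum, Finset.sum_sub_distrib, Finset.sum_mul, Finset.sum_mul]
    have h4 : ∀ j, m' j * m i - m j * m' i = 0 := by
      intro j
      by_cases hij : j = i
      · subst hij; ring
      · have := h (e i) (e j) (by simpa using horth i i) (by simpa [hij] using horth j j)
          (by simpa [Ne.symm hij] using horth i j)
        simp only [hm, hm']
        linear_combination this
    rw [← h1, h2, h3]
    simp [h4]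
  have hN0 : N = 0 := by
    have := hNh.spectral_theorem
    rw [show Matrix.diagonal (RCLike.ofReal ∘ hNh.eigenvalues) = (0 : Matrix (Fin n) (Fin n) ℂ) by
      ext i j; by_cases hij : i = j <;> simp [Matrix.diagonal, hij, hev]] at this
    simpa using this
  have hprop : τ' • M = τ • M' := by
    have := sub_eq_zero.mp hN0
    exact this
  -- positivity of traces
  have hτnn := trnn M hM
  have hτ'nn := trnn M' hM'
  rw [← hτ] at hτnn
  rw [← hτ'] at hτ'nn
  obtain ⟨hτre, hτim⟩ := Complex.nonneg_iff.mp hτnn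
  obtain ⟨hτ're, hτ'im⟩ := Complex.nonneg_iff.mp hτ'nn
  have hτeq : τ = (τ.re : ℂ) := by
    rw [Complex.ext_iff]; simp [hτim]
  have hτ'eq : τ' = (τ'.re : ℂ) := by
    rw [Complex.ext_iff]; simp [hτ'im]
  have hτ'ne : τ'.re ≠ 0 := by
    intro hc
    exact htr (by rw [hτ'eq, hc, Complex.ofReal_zero])
  refine ⟨τ.re / τ'.re, div_nonneg hτre hτ're, ?_⟩
  have hτ'ne' : τ' ≠ 0 := htr
  have hMeq : M = (τ'⁻¹ * τ) • M' := by
    have := congrArg (fun X => τ'⁻¹ • X) hprop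
    simpa only [smul_smul, inv_mul_cancel₀ hτ'ne', one_smul] using this
  have hcast : ((τ.re / τ'.re : ℝ) : ℂ) = τ'⁻¹ * τ := by
    rw [Complex.ofReal_div, ← hτeq, ← hτ'eq, div_eq_inv_mul]
  rw [hMeq, ← hcast]
end

section
/- Let X be a finite type, p : X → ℝ≥0 a probability distribution, and suppose efficiencies factorize: E₁(α,x) = F₁(α)G₁(x), E₂(β,x) = F₂(β)G₂(x), all positive. For outcome probabilities p₁(s|α,x), p₂(s|β,x) ≥ 0 (s ∈ {+,−}) with Σ_s p₁(s|α,x) = E₁(α,x) and Σ_s p₂(s|β,x) = E₂(β,x), define the postselected joint probabilities q(s₁,s₂|α,β) = (Σₓ p(x) p₁(s₁|α,x) p₂(s₂|β,x)) / (Σₓ p(x) E₁(α,x) E₂(β,x)). Then there exist a probability distribution p̃ on X and conditional probabilities p̃₁(s|α,x), p̃₂(s|β,x) ≥ 0 with Σ_s p̃₁(s|α,x) = 1 and Σ_s p̃₂(s|β,x) = 1, such that q(s₁,s₂|α,β) = Σₓ p̃(x) p̃₁(s₁|α,x) p̃₂(s₂|β,x) for all s₁, s₂, α, β. -/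
/-- Theorem 1: under factorized (fair-sampling) loss, the postselected joint
probabilities of a lossy LHV model are reproduced exactly by a lossless LHV
model.  Outcomes s ∈ {+,−} are encoded by `Bool`. -/
theorem fair_sampling_reduction (X S₁ S₂ : Type) [Fintype X]
    (p : X → ℝ) (hp : ∀ x, 0 ≤ p x) (hp1 : ∑ x, p x = 1)
    (F₁ : S₁ → ℝ) (F₂ : S₂ → ℝ) (G₁ G₂ : X → ℝ)
    (hF₁ : ∀ α, 0 < F₁ α) (hF₂ : ∀ β, 0 < F₂ β)
    (hG₁ : ∀ x, 0 < G₁ x) (hG₂ : ∀ x, 0 < G₂ x)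
    (E₁ : S₁ → X → ℝ) (E₂ : S₂ → X → ℝ)
    (hE₁ : ∀ α x, E₁ α x = F₁ α * G₁ x)
    (hE₂ : ∀ β x, E₂ β x = F₂ β * G₂ x)
    (p₁ : Bool → S₁ → X → ℝ) (p₂ : Bool → S₂ → X → ℝ)
    (hp₁0 : ∀ s α x, 0 ≤ p₁ s α x) (hp₂0 : ∀ s β x, 0 ≤ p₂ s β x)
    (hp₁E : ∀ α x, p₁ true α x + p₁ false α x = E₁ α x)
    (hp₂E : ∀ β x, p₂ true β x + p₂ false β x = E₂ β x) :
    ∃ (pt : X → ℝ) (q₁ : Bool → S₁ → X → ℝ) (q₂ : Bool → S₂ → X → ℝ),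
      (∀ x, 0 ≤ pt x) ∧ (∑ x, pt x = 1) ∧
      (∀ s α x, 0 ≤ q₁ s α x) ∧ (∀ s β x, 0 ≤ q₂ s β x) ∧
      (∀ α x, q₁ true α x + q₁ false α x = 1) ∧
      (∀ β x, q₂ true β x + q₂ false β x = 1) ∧
      (∀ (s₁ s₂ : Bool) (α : S₁) (β : S₂),
        (∑ x, p x * p₁ s₁ α x * p₂ s₂ β x)
            / (∑ x, p x * E₁ α x * E₂ β x)
          = ∑ x, pt x * q₁ s₁ α x * q₂ s₂ β x) := by
  set Z : ℝ := ∑ x, p x * G₁ x * G₂ x with hZ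
  have hXne : Nonempty X := by
    by_contra h
    rw [not_nonempty_iff] at h
    simp at hp1
  have hZpos : 0 < Z := by
    have hex : ∃ x, 0 < p x := by
      by_contra h
      push_neg at h
      have : ∑ x, p x = 0 := Finset.sum_eq_zero fun x _ => le_antisymm (h x) (hp x)
      simp [this] at hp1
    obtain ⟨x0, hx0⟩ := hex
    refine Finset.sum_pos' (fun x _ => ?_) ⟨x0, Finset.mem_univ x0, ?_⟩
    · exact mul_nonneg (mul_nonneg (hp x) (hG₁ x).le) (hG₂ x).le
    · exact mul_pos (mul_pos hx0 (hG₁ x0)) (hG₂ x0)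
  refine ⟨fun x => p x * G₁ x * G₂ x / Z,
    fun s α x => p₁ s α x / (F₁ α * G₁ x),
    fun s β x => p₂ s β x / (F₂ β * G₂ x), ?_, ?_, ?_, ?_, ?_, ?_, ?_⟩
  · intro x
    exact div_nonneg (mul_nonneg (mul_nonneg (hp x) (hG₁ x).le) (hG₂ x).le) hZpos.le
  · rw [← Finset.sum_div, div_self hZpos.ne']
  · intro s α x
    exact div_nonneg (hp₁0 s α x) (mul_pos (hF₁ α) (hG₁ x)).le
  · intro s β x
    exact div_nonneg (hp₂0 s β x) (mul_pos (hF₂ β) (hG₂ x)).le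
  · intro α x
    rw [← add_div, hp₁E, hE₁, div_self (mul_pos (hF₁ α) (hG₁ x)).ne']
  · intro β x
    rw [← add_div, hp₂E, hE₂, div_self (mul_pos (hF₂ β) (hG₂ x)).ne']
  · intro s₁ s₂ α β
    have hden : (∑ x, p x * E₁ α x * E₂ β x) = F₁ α * F₂ β * Z := by
      rw [hZ, Finset.mul_sum]
      apply Finset.sum_congr rfl
      intro x _
      rw [hE₁, hE₂]; ring
    rw [hden]
    rw [Finset.sum_congr rfl (fun x _ => show
        p x * G₁ x * G₂ x / Z * (p₁ s₁ α x / (F₁ α * G₁ x)) * (p₂ s₂ β x / (F₂ β * G₂ x))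
        = p x * p₁ s₁ α x * p₂ s₂ β x / (F₁ α * F₂ β * Z) by
      have h1 : G₁ x ≠ 0 := (hG₁ x).ne'
      have h2 : G₂ x ≠ 0 := (hG₂ x).ne'
      have h3 : F₁ α ≠ 0 := (hF₁ α).ne'
      have h4 : F₂ β ≠ 0 := (hF₂ β).ne'
      field_simp)]
    rw [← Finset.sum_div]
end
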